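/- arXiv:1508.04469 — 5 statements merged into one kernel-verified Lean document; each statement's English description precedes it below -/
import Mathlib

section
/- Let $d > 0$ and $\gamma > 0$ be fixed. For each $N \geq 3$ define $\mathcal{W}_N = \frac{\log N}{8 \log\log N}$, $w_N = \frac{\gamma \mathcal{W}_N}{2}$, $\mathcal{T}_N = \frac{16(\log\log N)^2}{\gamma \log N}$, $f_N = \frac{d(e^{(w_N-d)\mathcal{T}_N}-1)}{w_N e^{(w_N-d)\mathcal{T}_N}-d}$, and $g_N = \frac{w_N(e^{(w_N-d)\mathcal{T}_N}-1)}{w_N e^{(w_N-d)\mathcal{T}_N}-d}$. Then $\lim_{N \to \infty} (\log N)(1-f_N)(1-g_N) = 1$. -/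
open Real Filter

noncomputable def llog (N : ℕ) : ℝ := Real.log (Real.log N)
noncomputable def Wc (N : ℕ) : ℝ := Real.log N / (8 * llog N)
noncomputable def Tc (γ : ℝ) (N : ℕ) : ℝ := 16 * (llog N) ^ 2 / (γ * Real.log N)
noncomputable def wc (γ : ℝ) (N : ℕ) : ℝ := γ * Wc N / 2
noncomputable def fc (d γ : ℝ) (N : ℕ) : ℝ :=
  d * (Real.exp ((wc γ N - d) * Tc γ N) - 1) /
    (wc γ N * Real.exp ((wc γ N - d) * Tc γ N) - d)
noncomputable def gc (d γ : ℝ) (N : ℕ) : ℝ :=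
  wc γ N * (Real.exp ((wc γ N - d) * Tc γ N) - 1) /
    (wc γ N * Real.exp ((wc γ N - d) * Tc γ N) - d)

theorem stmt_3 (d γ : ℝ) (hd : 0 < d) (hγ : 0 < γ) :
    Tendsto (fun N : ℕ => Real.log N * (1 - fc d γ N) * (1 - gc d γ N)) atTop (nhds 1) := by
  have hlog : Tendsto (fun N : ℕ => Real.log N) atTop atTop :=
    Real.tendsto_log_atTop.comp tendsto_natCast_atTop_atTop
  have hll : Tendsto llog atTop atTop := Real.tendsto_log_atTop.comp hlog
  -- eventually log N > 1
  have hLev : ∀ᶠ N : ℕ in atTop, 1 < Real.log N := hlog.eventually_gt_atTop 1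
  -- w tends to atTop
  have hw : Tendsto (fun N => wc γ N) atTop atTop := by
    have haux : Tendsto (fun x : ℝ => γ * (Real.exp x / (8 * x)) / 2) atTop atTop := by
      have h1 : Tendsto (fun x : ℝ => Real.exp x / x ^ 1) atTop atTop :=
        Real.tendsto_exp_div_pow_atTop 1
      have h2 : Tendsto (fun x : ℝ => Real.exp x / (8 * x)) atTop atTop := by
        have := h1.atTop_div_const (by norm_num : (0:ℝ) < 8)
        refine this.congr fun x => ?_
        simp [pow_one]; ring
      exact (h2.const_mul_atTop hγ).atTop_div_const (by norm_num)
    refine Tendsto.congr' ?_ (haux.comp hll)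
    filter_upwards [hLev] with N hN
    have hLpos : (0:ℝ) < Real.log N := lt_trans one_pos hN
    simp only [Function.comp, wc, Wc, llog]
    rw [Real.exp_log hLpos]
  -- T tends to 0
  have hT : Tendsto (fun N => Tc γ N) atTop (nhds 0) := by
    have haux : Tendsto (fun x : ℝ => 16 / γ * (x ^ 2 * Real.exp (-x))) atTop (nhds 0) := by
      have := (Real.tendsto_pow_mul_exp_neg_atTop_nhds_zero 2).const_mul (16 / γ)
      simpa using this
    refine Tendsto.congr' ?_ (haux.comp hll)
    filter_upwards [hLev] with N hN
    have hLpos : (0:ℝ) < Real.log N := lt_trans one_pos hN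
    simp only [Function.comp, Tc, llog]
    rw [Real.exp_neg, Real.exp_log hLpos]
    field_simp
  -- exp(d T) → 1
  have hexp : Tendsto (fun N => Real.exp (d * Tc γ N)) atTop (nhds 1) := by
    have h0 : Tendsto (fun N => d * Tc γ N) atTop (nhds 0) := by
      simpa using hT.const_mul d
    simpa [Function.comp_def] using (Real.continuous_exp.tendsto 0).comp h0
  -- w * log N → ∞
  have hwl : Tendsto (fun N => wc γ N * Real.log N) atTop atTop :=
    hw.atTop_mul_atTop₀ hlog
  -- q := d e^{dT}/(w L) → 0
  have hq : Tendsto (fun N => d * Real.exp (d * Tc γ N) / (wc γ N * Real.log N)) atTop (nhds 0) :=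
    Tendsto.div_atTop (by simpa using (tendsto_const_nhds.mul hexp)) hwl
  have hda : Tendsto (fun N => d / wc γ N) atTop (nhds 0) :=
    Tendsto.div_atTop tendsto_const_nhds hw
  -- the comparison function G
  have hG : Tendsto (fun N => Real.exp (d * Tc γ N) *
      ((1 - d / wc γ N) / (1 - d * Real.exp (d * Tc γ N) / (wc γ N * Real.log N))) ^ 2)
      atTop (nhds 1) := by
    have h1 : Tendsto (fun N => 1 - d / wc γ N) atTop (nhds 1) := by
      simpa using tendsto_const_nhds.sub hda
    have h2 : Tendsto (fun N => 1 - d * Real.exp (d * Tc γ N) / (wc γ N * Real.log N))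
        atTop (nhds 1) := by
      simpa using tendsto_const_nhds.sub hq
    have h3 := (h1.div h2 one_ne_zero).pow 2
    simpa using hexp.mul h3
  refine Tendsto.congr' ?_ hG
  filter_upwards [hLev, hw.eventually_gt_atTop d,
    hq.eventually (gt_mem_nhds (by norm_num : (0:ℝ) < 1)),
    hw.eventually_gt_atTop 0] with N hL1 hwd hq1 hw0
  have hLpos : (0:ℝ) < Real.log N := lt_trans one_pos hL1
  set L := Real.log N with hLdef
  set a := wc γ N with hadef
  set t := Tc γ N with htdef
  have hllpos : 0 < llog N := Real.log_pos hL1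
  -- key: w T = llog N and e^{wT} = L
  have hwT : a * t = llog N := by
    simp only [hadef, htdef, wc, Wc, Tc]
    field_simp [show Real.log (N:ℝ) ≠ 0 from hLpos.ne']
    ring
  have hE : Real.exp ((a - d) * t) = L / Real.exp (d * t) := by
    have hll' : llog N = Real.log L := by rw [hLdef]; rfl
    rw [sub_mul, Real.exp_sub, hwT, hll', Real.exp_log hLpos]
  have hX : (0:ℝ) < Real.exp (d * t) := Real.exp_pos _
  have haL : 0 < a * L := mul_pos hw0 hLpos
  have hnum : 0 < a * L - d * Real.exp (d * t) := by
    have : d * Real.exp (d * t) < a * L := by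
      have := (div_lt_one haL).mp hq1
      linarith
    linarith
  have hden : a * Real.exp ((a - d) * t) - d ≠ 0 := by
    rw [hE]
    have : a * (L / Real.exp (d * t)) - d = (a * L - d * Real.exp (d * t)) / Real.exp (d * t) := by
      field_simp
    rw [this]
    positivity
  have hfrac : a * (L / Real.exp (d * t)) - d
      = (a * L - d * Real.exp (d * t)) / Real.exp (d * t) := by
    field_simp
  have hfrac2 : (1:ℝ) - d / a = (a - d) / a := by
    field_simp
  have hfrac3 : (1:ℝ) - d * Real.exp (d * t) / (a * L)
      = (a * L - d * Real.exp (d * t)) / (a * L) := by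
    rw [eq_div_iff haL.ne']
    field_simp
  simp only [fc, gc]
  rw [hE, hfrac, hfrac2, hfrac3]
  field_simp [hnum.ne', hX.ne', hw0.ne', hLpos.ne']
  ring
end

section
/- Let $d > 0$ and $\gamma > 0$ be fixed. With $\mathcal{W}_N = \frac{\log N}{8 \log\log N}$, $w_N = \frac{\gamma \mathcal{W}_N}{2}$, $\mathcal{T}_N = \frac{16(\log\log N)^2}{\gamma \log N}$, $f_N$ and $g_N$ as in the birth-death process formulas, we have $\lim_{N \to \infty} (1-f_N)\, g_N^{\mathcal{W}_N} = 1$. -/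
open Real Filter

noncomputable def Ec (d γ : ℝ) (N : ℕ) : ℝ := Real.exp ((wc γ N - d) * Tc γ N)

noncomputable def Xc (d γ : ℝ) (N : ℕ) : ℝ :=
  (wc γ N - d) / (wc γ N * Ec d γ N - d)

lemma aux_ids (d w e W : ℝ) (hw : 0 < w) (he : 0 < e) (hne : 0 < w * e - d) :
    d * (e - 1) / (w * e - d) = d / w * (1 - e⁻¹) / (1 - d / w * e⁻¹) ∧
    w * (e - 1) / (w * e - d) = 1 - (w - d) / (w * e - d) ∧
    W * ((w - d) / (w * e - d)) = W / e * (1 - d / w) / (1 - d / w * e⁻¹) ∧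
    (w - d) / (w * e - d) = e⁻¹ * (1 - d / w) / (1 - d / w * e⁻¹) := by
  have hkey : 1 - d / w * e⁻¹ = (w * e - d) / (w * e) := by
    field_simp
  have hwe : (0:ℝ) < w * e := mul_pos hw he
  refine ⟨?_, ?_, ?_, ?_⟩
  · rw [hkey, div_div_eq_mul_div, div_eq_div_iff hne.ne' hne.ne']
    field_simp
  · field_simp
    ring
  · rw [hkey]
    field_simp
  · rw [hkey]
    field_simp

theorem stmt_4 (d γ : ℝ) (hd : 0 < d) (hγ : 0 < γ) :
    Tendsto (fun N : ℕ => (1 - fc d γ N) * Real.exp (Wc N * Real.log (gc d γ N)))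
      atTop (nhds 1) := by
  have hγ' : γ ≠ 0 := hγ.ne'
  -- basic limits
  have hLtop : Tendsto (fun N : ℕ => Real.log N) atTop atTop :=
    Real.tendsto_log_atTop.comp tendsto_natCast_atTop_atTop
  have hlltop : Tendsto llog atTop atTop := Real.tendsto_log_atTop.comp hLtop
  have hlog1 : Tendsto (fun x : ℝ => Real.log x / x) atTop (nhds 0) := by
    simpa using Real.tendsto_pow_log_div_mul_add_atTop 1 0 1 one_ne_zero
  have hlog2 : Tendsto (fun x : ℝ => Real.log x ^ 2 / x) atTop (nhds 0) := by
    simpa using Real.tendsto_pow_log_div_mul_add_atTop 1 0 2 one_ne_zero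
  have hbase : ∀ᶠ N : ℕ in atTop, 1 ≤ Real.log N ∧ 1 ≤ llog N :=
    (hLtop.eventually_ge_atTop 1).and (hlltop.eventually_ge_atTop 1)
  -- d / wc → 0
  have ha_eq : ∀ᶠ N : ℕ in atTop,
      d / wc γ N = 16 * d / γ * ((fun x : ℝ => Real.log x / x) (Real.log N)) := by
    filter_upwards [hbase] with N hN
    have hL : Real.log N ≠ 0 := by linarith [hN.1]
    have hll : llog N ≠ 0 := by linarith [hN.2]
    simp only [wc, Wc]
    rw [llog] at hll ⊢
    field_simp
    ring
  have ha0 : Tendsto (fun N : ℕ => d / wc γ N) atTop (nhds 0) := by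
    have h1 := (hlog1.comp hLtop).const_mul (16 * d / γ)
    rw [mul_zero] at h1
    exact h1.congr' (ha_eq.mono fun N h => h.symm)
  -- d * Tc → 0
  have hdT_eq : ∀ᶠ N : ℕ in atTop,
      d * Tc γ N = 16 * d / γ * ((fun x : ℝ => Real.log x ^ 2 / x) (Real.log N)) := by
    filter_upwards [hbase] with N hN
    have hL : Real.log N ≠ 0 := by linarith [hN.1]
    simp only [Tc, llog]
    rw [llog] at *
    field_simp
  have hdT0 : Tendsto (fun N : ℕ => d * Tc γ N) atTop (nhds 0) := by
    have h1 := (hlog2.comp hLtop).const_mul (16 * d / γ)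
    rw [mul_zero] at h1
    exact h1.congr' (hdT_eq.mono fun N h => h.symm)
  -- (wc - d) * Tc = llog - d * Tc, tends to atTop
  have hwdT : ∀ᶠ N : ℕ in atTop,
      (wc γ N - d) * Tc γ N = llog N - d * Tc γ N := by
    filter_upwards [hbase] with N hN
    have hL : Real.log N ≠ 0 := by linarith [hN.1]
    have hll : llog N ≠ 0 := by linarith [hN.2]
    have hwT : wc γ N * Tc γ N = llog N := by
      simp only [wc, Wc, Tc]
      field_simp
      ring
    rw [sub_mul, hwT]
  have hexptop : Tendsto (fun N : ℕ => (wc γ N - d) * Tc γ N) atTop atTop := by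
    have h1 : Tendsto (fun N : ℕ => llog N - 1) atTop atTop :=
      tendsto_atTop_add_const_right _ _ hlltop
    refine tendsto_atTop_mono' atTop ?_ h1 |>.congr' (hwdT.mono fun N h => h.symm)
    filter_upwards [hdT0.eventually_le_const (by norm_num : (0:ℝ) < 1)] with N h
    linarith
  have hEtop : Tendsto (Ec d γ) atTop atTop := Real.tendsto_exp_atTop.comp hexptop
  have he0 : Tendsto (fun N => (Ec d γ N)⁻¹) atTop (nhds 0) := hEtop.inv_tendsto_atTop
  -- Wc / Ec → 0
  have hWE_eq : ∀ᶠ N : ℕ in atTop,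
      Wc N / Ec d γ N = Real.exp (d * Tc γ N) * (8 * llog N)⁻¹ := by
    filter_upwards [hbase, hwdT] with N hN h1
    have hL0 : (0:ℝ) < Real.log N := by linarith [hN.1]
    have hll0 : (0:ℝ) < llog N := by linarith [hN.2]
    have hEeq : Ec d γ N = Real.log N / Real.exp (d * Tc γ N) := by
      rw [Ec, h1, Real.exp_sub]
      congr 1
      rw [llog, Real.exp_log hL0]
    rw [hEeq, Wc]
    have hedt := Real.exp_pos (d * Tc γ N)
    field_simp
  have hWE0 : Tendsto (fun N => Wc N / Ec d γ N) atTop (nhds 0) := by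
    have h1 : Tendsto (fun N : ℕ => Real.exp (d * Tc γ N)) atTop (nhds 1) := by
      have := (Real.continuous_exp.tendsto 0).comp hdT0
      simpa [Function.comp_def] using this
    have h2 : Tendsto (fun N : ℕ => (8 * llog N)⁻¹) atTop (nhds 0) :=
      (tendsto_const_mul_atTop_of_pos (by norm_num : (0:ℝ) < 8) |>.2 hlltop).inv_tendsto_atTop
    have := h1.mul h2
    rw [mul_zero] at this
    exact this.congr' (hWE_eq.mono fun N h => h.symm)
  -- structural identities, eventually
  have hstruct : ∀ᶠ N : ℕ in atTop,
      fc d γ N = d / wc γ N * (1 - (Ec d γ N)⁻¹) / (1 - d / wc γ N * (Ec d γ N)⁻¹) ∧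
      gc d γ N = 1 - Xc d γ N ∧
      0 ≤ Xc d γ N ∧
      Wc N * Xc d γ N =
        Wc N / Ec d γ N * (1 - d / wc γ N) / (1 - d / wc γ N * (Ec d γ N)⁻¹) ∧
      Xc d γ N = (Ec d γ N)⁻¹ * (1 - d / wc γ N) / (1 - d / wc γ N * (Ec d γ N)⁻¹) ∧
      0 ≤ Wc N := by
    filter_upwards [hbase, ha0.eventually_le_const (by norm_num : (0:ℝ) < 1/2)]
      with N hN ha2
    have hL0 : (0:ℝ) < Real.log N := by linarith [hN.1]
    have hll0 : (0:ℝ) < llog N := by linarith [hN.2]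
    have hw0 : 0 < wc γ N := by
      simp only [wc, Wc]
      have : (0:ℝ) < 8 * llog N := by linarith
      positivity
    have hdw : d < wc γ N := by
      have := (div_le_iff₀ hw0).mp ha2
      linarith
    have hT0 : 0 < Tc γ N := by
      simp only [Tc]
      positivity
    have hE1 : 1 ≤ Ec d γ N := by
      rw [Ec]
      exact Real.one_le_exp (mul_nonneg (by linarith) hT0.le)
    have hE0 : 0 < Ec d γ N := Real.exp_pos _
    have hne : 0 < wc γ N * Ec d γ N - d := by
      have : wc γ N * 1 ≤ wc γ N * Ec d γ N := by
        apply mul_le_mul_of_nonneg_left hE1 hw0.le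
      nlinarith
    obtain ⟨i1, i2, i3, i4⟩ := aux_ids d (wc γ N) (Ec d γ N) (Wc N) hw0 hE0 hne
    have hWc0 : 0 ≤ Wc N := by
      rw [Wc]
      positivity
    refine ⟨?_, ?_, ?_, ?_, ?_, hWc0⟩
    · rw [fc, ← Ec, i1]
    · rw [gc, ← Ec, i2, Xc]
    · rw [Xc]
      exact div_nonneg (by linarith) hne.le
    · rw [Xc]
      exact i3
    · rw [Xc]
      exact i4
  -- fc → 0
  have hden : Tendsto (fun N : ℕ => 1 - d / wc γ N * (Ec d γ N)⁻¹) atTop (nhds 1) := by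
    have := (tendsto_const_nhds : Tendsto (fun _ : ℕ => (1:ℝ)) atTop (nhds 1)).sub (ha0.mul he0)
    simpa using this
  have hfc0 : Tendsto (fc d γ) atTop (nhds 0) := by
    have hnum : Tendsto (fun N : ℕ => d / wc γ N * (1 - (Ec d γ N)⁻¹)) atTop (nhds 0) := by
      have := ha0.mul ((tendsto_const_nhds : Tendsto (fun _ : ℕ => (1:ℝ)) atTop (nhds 1)).sub he0)
      simpa using this
    have h1 := hnum.div hden one_ne_zero
    rw [zero_div] at h1
    exact h1.congr' (hstruct.mono fun N h => h.1.symm)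
  -- Wc * Xc → 0 and Xc → 0
  have hWx0 : Tendsto (fun N : ℕ => Wc N * Xc d γ N) atTop (nhds 0) := by
    have h1 := ((hWE0.mul ((tendsto_const_nhds : Tendsto (fun _ : ℕ => (1:ℝ)) atTop (nhds 1)).sub ha0)).div hden one_ne_zero)
    have h2 : (0:ℝ) * (1 - 0) / 1 = 0 := by norm_num
    rw [h2] at h1
    exact h1.congr' (hstruct.mono fun N h => h.2.2.2.1.symm)
  have hX0 : Tendsto (Xc d γ) atTop (nhds 0) := by
    have h1 := ((he0.mul ((tendsto_const_nhds : Tendsto (fun _ : ℕ => (1:ℝ)) atTop (nhds 1)).sub ha0)).div hden one_ne_zero)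
    have h2 : (0:ℝ) * (1 - 0) / 1 = 0 := by norm_num
    rw [h2] at h1
    exact h1.congr' (hstruct.mono fun N h => h.2.2.2.2.1.symm)
  -- squeeze for Wc * log gc
  have hlogb : ∀ᶠ N : ℕ in atTop,
      -(2 * (Wc N * Xc d γ N)) ≤ Wc N * Real.log (gc d γ N) ∧
      Wc N * Real.log (gc d γ N) ≤ 0 := by
    filter_upwards [hstruct, hX0.eventually_le_const (by norm_num : (0:ℝ) < 1/2)]
      with N hm hX2
    obtain ⟨-, hg, hXpos, -, -, hW0⟩ := hm
    set x := Xc d γ N with hx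
    have hx1 : 0 < 1 - x := by linarith
    have hlog_le : Real.log (1 - x) ≤ -x := by
      have := Real.log_le_sub_one_of_pos hx1
      linarith
    have hlog_ge : -(2 * x) ≤ Real.log (1 - x) := by
      have h3 : Real.exp (-(2 * x)) ≤ 1 / (1 + 2 * x) := by
        rw [Real.exp_neg, one_div]
        have := Real.add_one_le_exp (2 * x)
        exact inv_anti₀ (by linarith) (by linarith)
      have h4 : 1 / (1 + 2 * x) ≤ 1 - x := by
        rw [div_le_iff₀ (by linarith)]
        nlinarith
      calc -(2 * x) = Real.log (Real.exp (-(2 * x))) := (Real.log_exp _).symm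
        _ ≤ Real.log (1 - x) := Real.log_le_log (Real.exp_pos _) (by linarith)
    rw [hg]
    constructor
    · have h5 := mul_le_mul_of_nonneg_left hlog_ge hW0
      have h6 : Wc N * -(2 * x) = -(2 * (Wc N * x)) := by ring
      linarith [h6 ▸ h5]
    · have h7 : Real.log (1 - x) ≤ 0 := by linarith
      exact mul_nonpos_of_nonneg_of_nonpos hW0 h7
  have hlow : Tendsto (fun N : ℕ => -(2 * (Wc N * Xc d γ N))) atTop (nhds 0) := by
    have := (hWx0.const_mul (2:ℝ)).neg
    simpa using this
  have hWlog : Tendsto (fun N : ℕ => Wc N * Real.log (gc d γ N)) atTop (nhds 0) :=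
    tendsto_of_tendsto_of_tendsto_of_le_of_le' hlow tendsto_const_nhds
      (hlogb.mono fun N h => h.1) (hlogb.mono fun N h => h.2)
  -- conclusion
  have h1 : Tendsto (fun N : ℕ => 1 - fc d γ N) atTop (nhds 1) := by
    have := (tendsto_const_nhds : Tendsto (fun _ : ℕ => (1:ℝ)) atTop (nhds 1)).sub hfc0
    simpa using this
  have h2 : Tendsto (fun N : ℕ => Real.exp (Wc N * Real.log (gc d γ N))) atTop (nhds 1) := by
    have := (Real.continuous_exp.tendsto 0).comp hWlog
    simpa [Function.comp_def] using this
  have := h1.mul h2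
  simpa using this
end

section
/- Let $q \in (0,1]$, $\mu > 0$, $\gamma > 0$ be fixed. With $\mathcal{W}_N = \frac{\log N}{8\log\log N}$ and $\mathcal{T}_N = \frac{16(\log\log N)^2}{\gamma \log N}$, we have $\lim_{N \to \infty} \frac{N (q\mu\mathcal{T}_N)^{\lceil 2\mathcal{W}_N \rceil} e^{-q\mu\mathcal{T}_N}}{4 \cdot \lceil 2\mathcal{W}_N \rceil!} = \infty$. -/
open Real Filter Topology

lemma aux_tendstoL : Tendsto (fun N : ℕ => Real.log N) atTop atTop :=
  Real.tendsto_log_atTop.comp tendsto_natCast_atTop_atTop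

lemma aux_tendsto_llog : Tendsto llog atTop atTop :=
  Real.tendsto_log_atTop.comp aux_tendstoL

lemma aux_logdiv : Tendsto (fun x : ℝ => Real.log x / x) atTop (𝓝 0) := by
  simpa using Real.tendsto_pow_log_div_mul_add_atTop 1 0 1 one_ne_zero

lemma aux_log2div : Tendsto (fun x : ℝ => (Real.log x) ^ 2 / x) atTop (𝓝 0) := by
  simpa using Real.tendsto_pow_log_div_mul_add_atTop 1 0 2 one_ne_zero

lemma aux_lL : Tendsto (fun N : ℕ => llog N / Real.log N) atTop (𝓝 0) :=
  aux_logdiv.comp aux_tendstoL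

lemma aux_ll : Tendsto (fun N : ℕ => Real.log (llog N) / llog N) atTop (𝓝 0) :=
  aux_logdiv.comp aux_tendsto_llog

lemma aux_l2L : Tendsto (fun N : ℕ => (llog N) ^ 2 / Real.log N) atTop (𝓝 0) :=
  aux_log2div.comp aux_tendstoL

lemma aux_llL : Tendsto (fun N : ℕ => Real.log (llog N) / Real.log N) atTop (𝓝 0) := by
  apply tendsto_of_tendsto_of_tendsto_of_le_of_le' tendsto_const_nhds aux_lL
  · filter_upwards [aux_tendsto_llog.eventually_ge_atTop 1,
      aux_tendstoL.eventually_ge_atTop 1] with N hl hL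
    have : (0:ℝ) ≤ Real.log (llog N) := Real.log_nonneg hl
    positivity
  · filter_upwards [aux_tendsto_llog.eventually_ge_atTop 1,
      aux_tendstoL.eventually_ge_atTop 1] with N hl hL
    have h1 : Real.log (llog N) ≤ llog N := Real.log_le_self (by linarith)
    have h2 : (0:ℝ) < Real.log N := by linarith
    gcongr

lemma aux_logh_tendsto (c : ℝ) (hc : 0 < c) :
    Tendsto (fun N : ℕ => Real.log N + (Real.log N / (4 * llog N) + 1) *
      (Real.log c + 3 * Real.log (llog N) - 2 * llog N) - (1 + Real.log 4))
      atTop atTop := by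
  have hu : Tendsto (fun N : ℕ => 1/2 + Real.log c / (4 * llog N)
      + (3/4) * (Real.log (llog N) / llog N) + Real.log c / Real.log N
      + 3 * (Real.log (llog N) / Real.log N) - 2 * (llog N / Real.log N))
      atTop (𝓝 (1/2)) := by
    have h1 : Tendsto (fun N : ℕ => Real.log c / (4 * llog N)) atTop (𝓝 0) :=
      Tendsto.div_atTop tendsto_const_nhds (aux_tendsto_llog.const_mul_atTop (by norm_num))
    have h2 : Tendsto (fun N : ℕ => Real.log c / Real.log N) atTop (𝓝 0) :=
      Tendsto.div_atTop tendsto_const_nhds aux_tendstoL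
    have := (((((tendsto_const_nhds :
        Tendsto (fun _ : ℕ => (1/2:ℝ)) atTop (𝓝 (1/2))).add h1).add (aux_ll.const_mul (3/4))).add h2).add
      (aux_llL.const_mul 3)).sub (aux_lL.const_mul 2)
    simp only [mul_comm] at this ⊢
    convert this using 2 <;> norm_num
  have hmul : Tendsto (fun N : ℕ => Real.log N * (1/2 + Real.log c / (4 * llog N)
      + (3/4) * (Real.log (llog N) / llog N) + Real.log c / Real.log N
      + 3 * (Real.log (llog N) / Real.log N) - 2 * (llog N / Real.log N)))
      atTop atTop :=
    Filter.Tendsto.atTop_mul_pos (by norm_num : (0:ℝ) < 1/2) aux_tendstoL hu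
  have hev : (fun N : ℕ => Real.log N * (1/2 + Real.log c / (4 * llog N)
      + (3/4) * (Real.log (llog N) / llog N) + Real.log c / Real.log N
      + 3 * (Real.log (llog N) / Real.log N) - 2 * (llog N / Real.log N)))
      =ᶠ[atTop] (fun N : ℕ => Real.log N + (Real.log N / (4 * llog N) + 1) *
      (Real.log c + 3 * Real.log (llog N) - 2 * llog N)) := by
    filter_upwards [aux_tendsto_llog.eventually_ge_atTop 1,
      aux_tendstoL.eventually_ge_atTop 1] with N hl hL
    have hl0 : llog N ≠ 0 := by linarith
    have hL0 : Real.log N ≠ 0 := by linarith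
    field_simp
    ring
  simp only [sub_eq_add_neg]
  exact tendsto_atTop_add_const_right _ _ (hmul.congr' hev)

theorem stmt_6 (q μ γ : ℝ) (hq : q ∈ Set.Ioc (0:ℝ) 1) (hμ : 0 < μ) (hγ : 0 < γ) :
    Tendsto (fun N : ℕ =>
        (N : ℝ) * (q * μ * Tc γ N) ^ (⌈2 * Wc N⌉₊) * Real.exp (-(q * μ * Tc γ N)) /
          (4 * (Nat.factorial ⌈2 * Wc N⌉₊ : ℝ)))
      atTop atTop := by
  obtain ⟨hq0, hq1⟩ := hq
  set c : ℝ := 32 * q * μ / γ with hcdef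
  have hc : 0 < c := by positivity
  refine tendsto_atTop_mono' atTop ?_ (Real.tendsto_exp_atTop.comp (aux_logh_tendsto c hc))
  have h5src : Tendsto (fun N : ℕ => Real.log c / llog N
      + 3 * (Real.log (llog N) / llog N) - 2) atTop (𝓝 (0 + 3 * 0 - 2)) :=
    ((Tendsto.div_atTop tendsto_const_nhds aux_tendsto_llog).add
      (aux_ll.const_mul 3)).sub tendsto_const_nhds
  filter_upwards [aux_tendsto_llog.eventually_ge_atTop 1,
    aux_tendstoL.eventually_ge_atTop 1,
    aux_lL.eventually_lt_const (by norm_num : (0:ℝ) < 1/4),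
    aux_l2L.eventually_lt_const (by positivity : (0:ℝ) < γ / (16 * q * μ)),
    h5src.eventually_lt_const (by norm_num : (0:ℝ) + 3 * 0 - 2 < 0),
    eventually_ge_atTop 1] with N hl hL h3 h4 h5 hN
  set L := Real.log N with hLdef
  set l := llog N with hldef
  set k := ⌈2 * Wc N⌉₊ with hkdef
  set lam := q * μ * Tc γ N with hlamdef
  set B := Real.log c + 3 * Real.log l - 2 * l with hBdef
  have hl0 : (0:ℝ) < l := by linarith
  have hL0 : (0:ℝ) < L := by linarith
  have hNpos : (0:ℝ) < (N:ℝ) := by exact_mod_cast hN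
  have h4l : 4 * l ≤ L := by
    have := (div_lt_iff₀ hL0).mp h3
    linarith
  have hW : 2 * Wc N = L / (4 * l) := by
    rw [Wc, ← hldef, ← hLdef]; field_simp; ring
  have hWpos : 0 < 2 * Wc N := by rw [hW]; positivity
  have hk1 : 1 ≤ k := Nat.one_le_ceil_iff.mpr hWpos
  have hkpos : (0:ℝ) < (k:ℝ) := by exact_mod_cast hk1
  have hkW : (k:ℝ) ≤ L / (4 * l) + 1 := by
    rw [← hW]
    exact (Nat.ceil_lt_add_one hWpos.le).le
  have hone : (1:ℝ) ≤ L / (4 * l) := by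
    rw [le_div_iff₀ (by positivity)]; linarith
  have hk2 : (k:ℝ) ≤ L / (2 * l) := by
    have : L / (2 * l) = L / (4 * l) + L / (4 * l) := by field_simp; ring
    linarith
  have hlam : lam = q * μ * (16 * l ^ 2 / (γ * L)) := rfl
  have hlampos : 0 < lam := by rw [hlam]; positivity
  have hlam1 : lam ≤ 1 := by
    have h4' : l ^ 2 / L ≤ γ / (16 * q * μ) := h4.le
    have : lam = (16 * q * μ / γ) * (l ^ 2 / L) := by rw [hlam]; field_simp
    rw [this]
    calc (16 * q * μ / γ) * (l ^ 2 / L) ≤ (16 * q * μ / γ) * (γ / (16 * q * μ)) := by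
          gcongr
      _ = 1 := by field_simp
  have hB : B ≤ 0 := by
    have hmul := mul_neg_of_pos_of_neg hl0 h5
    have : B = l * (Real.log c / l + 3 * (Real.log l / l) - 2) := by
      field_simp; ring
    rw [this]; exact hmul.le
  have hexpB : Real.exp B = c * l ^ 3 / L ^ 2 := by
    have h1 : B = Real.log c + (3:ℕ) * Real.log l + -((2:ℕ) * l) := by
      rw [hBdef]; push_cast; ring
    rw [h1, Real.exp_add, Real.exp_add, Real.exp_log hc, Real.exp_nat_mul,
      Real.exp_log hl0, Real.exp_neg, Real.exp_nat_mul, hldef, llog,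
      Real.exp_log hL0]
    norm_num
    ring
  have hkexpB : (k:ℝ) * Real.exp B ≤ lam := by
    rw [hexpB]
    calc (k:ℝ) * (c * l ^ 3 / L ^ 2) ≤ (L / (2 * l)) * (c * l ^ 3 / L ^ 2) := by
          gcongr
      _ = lam := by rw [hlam, hcdef]; field_simp; ring
  have hfac : (Nat.factorial k : ℝ) * Real.exp ((k:ℝ) * B) ≤ lam ^ k := by
    calc (Nat.factorial k : ℝ) * Real.exp ((k:ℝ) * B)
        ≤ (k:ℝ) ^ k * Real.exp ((k:ℝ) * B) := by
          gcongr
          exact_mod_cast Nat.factorial_le_pow k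
      _ = ((k:ℝ) * Real.exp B) ^ k := by rw [mul_pow, ← Real.exp_nat_mul]
      _ ≤ lam ^ k := pow_le_pow_left₀ (by positivity) hkexpB k
  show Real.exp (L + (L / (4 * l) + 1) * B - (1 + Real.log 4))
      ≤ (N:ℝ) * lam ^ k * Real.exp (-lam) / (4 * (Nat.factorial k : ℝ))
  have hfacpos : (0:ℝ) < (Nat.factorial k : ℝ) := by
    exact_mod_cast Nat.factorial_pos k
  calc Real.exp (L + (L / (4 * l) + 1) * B - (1 + Real.log 4))
      = (N:ℝ) * Real.exp ((L / (4 * l) + 1) * B) * Real.exp (-1) / 4 := by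
        rw [show L + (L / (4 * l) + 1) * B - (1 + Real.log 4)
            = L + (L / (4 * l) + 1) * B + (-1) + (-(Real.log 4)) by ring,
          Real.exp_add, Real.exp_add, Real.exp_add, hLdef, Real.exp_log hNpos,
          Real.exp_neg (Real.log 4), Real.exp_log (by norm_num : (0:ℝ) < 4)]
        ring
    _ ≤ (N:ℝ) * Real.exp ((k:ℝ) * B) * Real.exp (-1) / 4 := by
        gcongr (N:ℝ) * ?_ * Real.exp (-1) / 4
        exact Real.exp_le_exp.mpr (mul_le_mul_of_nonpos_right hkW hB)
    _ ≤ (N:ℝ) * lam ^ k * Real.exp (-lam) / (4 * (Nat.factorial k : ℝ)) := by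
        rw [div_le_div_iff₀ (by norm_num) (by positivity)]
        calc (N:ℝ) * Real.exp ((k:ℝ) * B) * Real.exp (-1) * (4 * (Nat.factorial k : ℝ))
            = 4 * (N:ℝ) * ((Nat.factorial k : ℝ) * Real.exp ((k:ℝ) * B)) * Real.exp (-1) := by
              ring
          _ ≤ 4 * (N:ℝ) * lam ^ k * Real.exp (-1) := by
              gcongr 4 * (N:ℝ) * ?_ * Real.exp (-1)
          _ ≤ 4 * (N:ℝ) * lam ^ k * Real.exp (-lam) := by
              gcongr 4 * (N:ℝ) * lam ^ k * ?_
              exact Real.exp_le_exp.mpr (by linarith)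
          _ = (N:ℝ) * lam ^ k * Real.exp (-lam) * 4 := by ring
end

section
/- Let $q \in (0,1]$, $\mu > 0$, $\gamma > 0$ be fixed and $\mathcal{W}_N, \mathcal{T}_N$ as above. Then $\lim_{N\to\infty}\left(1 - \left(1 - \sum_{j \geq \lceil 2\mathcal{W}_N\rceil} \frac{(q\mu\mathcal{T}_N)^j e^{-q\mu\mathcal{T}_N}}{j!}\right)^{\lfloor N/4\rfloor}\right) = 1$. -/
open Real Filter

theorem stmt_10 (q μ γ : ℝ) (hq : q ∈ Set.Ioc (0:ℝ) 1) (hμ : 0 < μ) (hγ : 0 < γ) :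
    Tendsto (fun N : ℕ =>
        1 - (1 - ∑' j : ℕ, if ⌈2 * Wc N⌉₊ ≤ j then
              (q * μ * Tc γ N) ^ j * Real.exp (-(q * μ * Tc γ N)) / (Nat.factorial j : ℝ)
            else 0) ^ (N / 4))
      atTop (nhds 1) := by
  obtain ⟨hq0, hq1⟩ := hq
  set x : ℕ → ℝ := fun N => q * μ * Tc γ N with hxdef
  set F : ℕ → ℕ → ℝ := fun N j => if ⌈2 * Wc N⌉₊ ≤ j then
      x N ^ j * Real.exp (-(x N)) / (Nat.factorial j : ℝ) else 0 with hFdef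
  set p : ℕ → ℝ := fun N => ∑' j : ℕ, F N j with hpdef
  -- basic nonnegativity of x
  have hx0 : ∀ N, 0 ≤ x N := by
    intro N
    have hlog0 : 0 ≤ Real.log N := Real.log_natCast_nonneg N
    have : 0 ≤ Tc γ N := by
      unfold Tc
      apply div_nonneg (by positivity)
      exact mul_nonneg hγ.le hlog0
    positivity
  have hF0 : ∀ N j, 0 ≤ F N j := by
    intro N j
    simp only [hFdef]
    split
    · have := hx0 N; positivity
    · exact le_rfl
  -- summability
  have hsum : ∀ N, Summable (F N) := by
    intro N
    refine Summable.of_nonneg_of_le (hF0 N) (fun j => ?_)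
      ((Real.summable_pow_div_factorial (x N)).mul_right (Real.exp (-(x N))))
    simp only [hFdef]
    split
    · rw [div_mul_eq_mul_div]
    · have := hx0 N; positivity
  -- p ≤ 1
  have hp1 : ∀ N, p N ≤ 1 := by
    intro N
    have h2 : ∑' j : ℕ, x N ^ j / (Nat.factorial j : ℝ) * Real.exp (-(x N)) = 1 := by
      rw [tsum_mul_right]
      have hexp : ∑' j : ℕ, x N ^ j / (Nat.factorial j : ℝ) = Real.exp (x N) := by
        rw [Real.exp_eq_exp_ℝ, NormedSpace.exp_eq_tsum_div]
      rw [hexp, ← Real.exp_add]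
      simp
    calc p N ≤ ∑' j : ℕ, x N ^ j / (Nat.factorial j : ℝ) * Real.exp (-(x N)) := by
          apply Summable.tsum_le_tsum _ (hsum N) ((Real.summable_pow_div_factorial (x N)).mul_right _)
          intro j
          simp only [hFdef]
          split
          · rw [div_mul_eq_mul_div]
          · have := hx0 N; positivity
      _ = 1 := h2
  -- p ≥ term at k
  have hplb : ∀ N, x N ^ (⌈2 * Wc N⌉₊) * Real.exp (-(x N)) / (Nat.factorial ⌈2 * Wc N⌉₊ : ℝ)
      ≤ p N := by
    intro N
    have := Summable.le_tsum (hsum N) (⌈2 * Wc N⌉₊) (fun j _ => hF0 N j)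
    simpa only [hFdef, le_refl, if_pos] using this
  -- limits of log, llog
  have hlog : Tendsto (fun N : ℕ => Real.log N) atTop atTop :=
    Real.tendsto_log_atTop.comp tendsto_natCast_atTop_atTop
  have hllog : Tendsto llog atTop atTop := Real.tendsto_log_atTop.comp hlog
  have hlogdiv : Tendsto (fun y : ℝ => Real.log y / y) atTop (nhds 0) := by
    simpa using Real.tendsto_pow_log_div_mul_add_atTop 1 0 1 one_ne_zero
  -- Tc → 0
  have hTc : Tendsto (fun N => Tc γ N) atTop (nhds 0) := by
    have h2 : Tendsto (fun y : ℝ => Real.log y ^ 2 / y) atTop (nhds 0) := by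
      simpa using Real.tendsto_pow_log_div_mul_add_atTop 1 0 2 one_ne_zero
    have h3 : Tendsto (fun N : ℕ => (llog N) ^ 2 / Real.log N) atTop (nhds 0) := h2.comp hlog
    have h4 := h3.const_mul (16 / γ)
    rw [mul_zero] at h4
    refine h4.congr fun N => ?_
    unfold Tc
    rw [div_mul_div_comm]
  -- exponent tendsto
  have hE : Tendsto (fun N : ℕ => Real.log N / 2 - 2 * llog N) atTop atTop := by
    have h1 : Tendsto (fun y : ℝ => y / 2 - 2 * Real.log y) atTop atTop := by
      have hmul : Tendsto (fun y : ℝ => y * (1 / 2 - 2 * (Real.log y / y))) atTop atTop := by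
        apply Filter.Tendsto.atTop_mul_pos (C := 1 / 2) (by norm_num) tendsto_id
        have := (hlogdiv.const_mul 2)
        rw [mul_zero] at this
        simpa using tendsto_const_nhds.sub this
      refine hmul.congr' ?_
      filter_upwards [eventually_ne_atTop (0 : ℝ)] with y hy
      field_simp
    exact h1.comp hlog
  -- main eventual lower bound for (N/4) * p N
  have hmain : ∀ᶠ N : ℕ in atTop,
      Real.exp (Real.log N / 2 - 2 * llog N - (1 + Real.log 8)) ≤ (↑(N / 4) : ℝ) * p N := by
    have hev1 := hllog.eventually_ge_atTop (max 2 (γ / (16 * q * μ)))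
    have hev2 : ∀ᶠ N : ℕ in atTop, Tc γ N ≤ 1 / (q * μ) := by
      have : (0:ℝ) < 1 / (q * μ) := by positivity
      filter_upwards [hTc.eventually (eventually_le_nhds this)] with N h using h
    have hev3 := hlog.eventually_ge_atTop (4:ℝ)
    have hev4 := eventually_ge_atTop (8:ℕ)
    filter_upwards [hev1, hev2, hev3, hev4] with N hl12 hTc1 hL4 hN8
    set L := Real.log N with hLdef
    set l := llog N with hldef
    have hl2 : 2 ≤ l := le_trans (le_max_left _ _) hl12
    have hlγ : γ / (16 * q * μ) ≤ l := le_trans (le_max_right _ _) hl12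
    have hl0 : (0:ℝ) < l := by linarith
    have hL0 : (0:ℝ) < L := by linarith
    have hexpl : Real.exp l = L := by
      rw [hldef]; exact Real.exp_log hL0
    set k := ⌈2 * Wc N⌉₊ with hkdef
    -- x ≤ 1
    have hx1 : x N ≤ 1 := by
      have : x N ≤ q * μ * (1 / (q * μ)) := by
        apply mul_le_mul_of_nonneg_left hTc1 (by positivity)
      calc x N ≤ q * μ * (1 / (q * μ)) := this
        _ = 1 := by field_simp
    -- x ≥ 1/L
    have hxlb : 1 / L ≤ x N := by
      have hxeq : x N = 16 * q * μ * l ^ 2 / (γ * L) := by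
        simp only [hxdef]; unfold Tc; rw [← hLdef, ← hldef]; ring
      rw [hxeq, div_le_div_iff₀ hL0 (by positivity)]
      have hγle : γ ≤ 16 * q * μ * l := by
        rw [div_le_iff₀ (by positivity)] at hlγ
        linarith [hlγ]
      nlinarith [mul_le_mul_of_nonneg_right hγle hL0.le,
        mul_nonneg (mul_nonneg (mul_pos hq0 hμ).le hL0.le)
          (mul_nonneg hl0.le (by linarith : (0:ℝ) ≤ l - 1))]
    -- k bounds
    have h2W : 2 * Wc N = L / (4 * l) := by
      unfold Wc; rw [← hLdef, ← hldef]; ring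
    have h2W0 : 0 ≤ 2 * Wc N := by rw [h2W]; positivity
    have hkc : (k : ℝ) < L / (4 * l) + 1 := by
      rw [hkdef, ← h2W]; exact Nat.ceil_lt_add_one h2W0
    have hk_le : (k : ℝ) ≤ L := by
      have h1 : L / (4 * l) ≤ L / 4 := by
        gcongr
        · linarith
      linarith
    have h2kl : 2 * l * (k:ℝ) ≤ L / 2 + 2 * l := by
      have h1 : (k:ℝ) * l ≤ (L / (4 * l) + 1) * l :=
        mul_le_mul_of_nonneg_right hkc.le hl0.le
      have h2 : L / (4 * l) * l = L / 4 := by field_simp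
      nlinarith [h1, h2]
    -- lower bound on the single Poisson term
    have c1 : Real.exp (-(l * k)) ≤ x N ^ k := by
      have hxe : Real.exp (-l) ≤ x N := by
        rw [Real.exp_neg, hexpl, ← one_div]; exact hxlb
      calc Real.exp (-(l * k)) = Real.exp (-l) ^ k := by
            rw [← Real.exp_nat_mul]; ring_nf
        _ ≤ x N ^ k := pow_le_pow_left₀ (Real.exp_pos _).le hxe k
    have c2 : (Nat.factorial k : ℝ) ≤ Real.exp (l * k) := by
      calc (Nat.factorial k : ℝ) ≤ (k:ℝ) ^ k := by exact_mod_cast Nat.factorial_le_pow k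
        _ ≤ L ^ k := pow_le_pow_left₀ (Nat.cast_nonneg k) hk_le k
        _ = Real.exp (l * k) := by rw [← hexpl, ← Real.exp_nat_mul]; ring_nf
    have c3 : Real.exp (-(L / 2 + 2 * l) - 1) ≤
        x N ^ k * Real.exp (-(x N)) / (Nat.factorial k : ℝ) := by
      have step : Real.exp (-(l * k)) * Real.exp (-1) / Real.exp (l * k) ≤
          x N ^ k * Real.exp (-(x N)) / (Nat.factorial k : ℝ) := by
        apply div_le_div₀ (by have := hx0 N; positivity)
          (mul_le_mul c1 (Real.exp_le_exp.2 (by linarith)) (Real.exp_pos _).le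
            (by have := hx0 N; positivity))
          (by exact_mod_cast k.factorial_pos) c2
      refine le_trans ?_ step
      rw [← Real.exp_add, ← Real.exp_sub]
      apply Real.exp_le_exp.2
      linarith [h2kl]
    -- floor N/4 bound
    have hm : (N:ℝ) / 8 ≤ (↑(N / 4) : ℝ) := by
      have h1 : N < 4 * (N / 4) + 4 := by
        have := Nat.div_add_mod N 4
        have h2 := Nat.mod_lt N (show 0 < 4 by norm_num)
        omega
      have h1' : (N:ℝ) < 4 * (↑(N / 4) : ℝ) + 4 := by exact_mod_cast h1
      have hN8' : (8:ℝ) ≤ N := by exact_mod_cast hN8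
      linarith
    have hexpN : Real.exp (L - Real.log 8) = (N:ℝ) / 8 := by
      rw [Real.exp_sub, hLdef, Real.exp_log (by norm_num : (0:ℝ) < 8),
        Real.exp_log (by positivity : (0:ℝ) < N)]
    -- combine
    calc Real.exp (L / 2 - 2 * l - (1 + Real.log 8))
        = Real.exp (L - Real.log 8) * Real.exp (-(L / 2 + 2 * l) - 1) := by
          rw [← Real.exp_add]; ring_nf
      _ = (N:ℝ) / 8 * Real.exp (-(L / 2 + 2 * l) - 1) := by rw [hexpN]
      _ ≤ (↑(N / 4) : ℝ) * (x N ^ k * Real.exp (-(x N)) / (Nat.factorial k : ℝ)) := by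
          apply mul_le_mul hm c3 (Real.exp_pos _).le (by positivity)
      _ ≤ (↑(N / 4) : ℝ) * p N := by
          apply mul_le_mul_of_nonneg_left (hplb N) (Nat.cast_nonneg _)
  -- (N/4) * p N → ∞
  have hMP : Tendsto (fun N : ℕ => (↑(N / 4) : ℝ) * p N) atTop atTop := by
    apply tendsto_atTop_mono' atTop hmain
    apply tendsto_exp_atTop.comp
    have := tendsto_atTop_add_const_right atTop (-(1 + Real.log 8)) hE
    simpa [sub_eq_add_neg] using this
  -- (1 - p N)^(N/4) → 0
  have hsq : Tendsto (fun N : ℕ => (1 - p N) ^ (N / 4)) atTop (nhds 0) := by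
    apply squeeze_zero' (g := fun N : ℕ => Real.exp (-((↑(N / 4) : ℝ) * p N)))
    · filter_upwards with N
      exact pow_nonneg (by linarith [hp1 N]) _
    · filter_upwards with N
      have h1 : (1 - p N) ≤ Real.exp (-(p N)) := by
        linarith [Real.add_one_le_exp (-(p N))]
      have h0 : 0 ≤ 1 - p N := by linarith [hp1 N]
      calc (1 - p N) ^ (N / 4) ≤ Real.exp (-(p N)) ^ (N / 4) :=
            pow_le_pow_left₀ h0 h1 _
        _ = Real.exp (-((↑(N / 4) : ℝ) * p N)) := by
            rw [← Real.exp_nat_mul]; ring_nf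
    · exact Real.tendsto_exp_atBot.comp (tendsto_neg_atTop_atBot.comp hMP)
  have h : Tendsto (fun N : ℕ => 1 - (1 - p N) ^ (N / 4)) atTop (nhds (1 - 0)) :=
    tendsto_const_nhds.sub hsq
  rw [sub_zero] at h
  exact h
end

section
/- Fix reals $q \in (0,1]$, $\mu > 0$, $\gamma > 0$, and define $\mathcal{W}_N = \frac{\log N}{8\log\log N}$, $\mathcal{T}_N = \frac{16(\log\log N)^2}{\gamma\log N}$. Then $\lim_{N\to\infty} \frac{N^{1/2 + \log(8\log\log N)/(2\log\log N)} \, (2q\mu\log\log N)^{\lceil 2\mathcal{W}_N\rceil} \, e^{-q\mu\mathcal{T}_N - \lceil 2\mathcal{W}_N\rceil}}{4(2\gamma)^{2\mathcal{W}_N}(4\pi\mathcal{W}_N)^{1/2}} = \infty$, where real powers $a^b$ are interpreted as $\exp(b\log a)$. -/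
open Real Filter

set_option maxHeartbeats 1000000 in
theorem stmt_19 (q μ γ : ℝ) (hq : q ∈ Set.Ioc (0:ℝ) 1) (hμ : 0 < μ) (hγ : 0 < γ) :
    Tendsto (fun N : ℕ =>
        Real.rpow (N : ℝ) (1 / 2 + Real.log (8 * llog N) / (2 * llog N)) *
            (2 * q * μ * llog N) ^ (⌈2 * Wc N⌉₊) *
            Real.exp (-(q * μ * Tc γ N) - (⌈2 * Wc N⌉₊ : ℝ)) /
          (4 * Real.rpow (2 * γ) (2 * Wc N) * Real.sqrt (4 * Real.pi * Wc N)))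
      atTop atTop := by
  obtain ⟨hq0, hq1⟩ := hq
  have hL : Tendsto (fun N : ℕ => Real.log N) atTop atTop :=
    Real.tendsto_log_atTop.comp tendsto_natCast_atTop_atTop
  have ht : Tendsto (fun N : ℕ => llog N) atTop atTop :=
    Real.tendsto_log_atTop.comp hL
  have hqμ : 0 < q * μ := mul_pos hq0 hμ
  -- eventual conditions
  have E1 : ∀ᶠ N : ℕ in atTop, 1 ≤ Real.log N := hL.eventually_ge_atTop 1
  have E2 : ∀ᶠ N : ℕ in atTop, 1 ≤ llog N := ht.eventually_ge_atTop 1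
  have E3 : ∀ᶠ N : ℕ in atTop, Real.exp 1 ≤ 2 * q * μ * llog N := by
    have : Tendsto (fun N : ℕ => 2 * q * μ * llog N) atTop atTop :=
      ht.const_mul_atTop (by positivity)
    exact this.eventually_ge_atTop _
  have E4 : ∀ᶠ N : ℕ in atTop, 2 * Real.log (2 * γ) ≤ llog N := ht.eventually_ge_atTop _
  have hsq : Tendsto (fun N : ℕ => (llog N) ^ 2 / Real.log N) atTop (nhds 0) := by
    have h0 := Real.tendsto_pow_log_div_mul_add_atTop 1 0 2 one_ne_zero
    have := h0.comp hL
    simp only [Function.comp, one_mul, add_zero] at this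
    exact this
  have E5 : ∀ᶠ N : ℕ in atTop, (llog N) ^ 2 / Real.log N < γ / (16 * q * μ) :=
    hsq.eventually_lt_const (by positivity)
  have hdiv : Tendsto (fun N : ℕ => llog N / Real.log N) atTop (nhds 0) := by
    have h0 := Real.isLittleO_log_id_atTop.tendsto_div_nhds_zero
    have := h0.comp hL
    simp only [Function.comp, id] at this
    exact this
  have E6 : ∀ᶠ N : ℕ in atTop, llog N / Real.log N < 1 / 16 :=
    hdiv.eventually_lt_const (by norm_num)
  have E7 : ∀ᶠ N : ℕ in atTop,
      16 * (1 + Real.log 4 + Real.log (4 * Real.pi) / 2) ≤ Real.log N :=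
    hL.eventually_ge_atTop _
  have hexp : Tendsto (fun N : ℕ => Real.exp (Real.log N / 4)) atTop atTop :=
    Real.tendsto_exp_atTop.comp (hL.atTop_div_const (by norm_num : (0:ℝ) < 4))
  refine tendsto_atTop_mono' atTop ?_ hexp
  filter_upwards [E1, E2, E3, E4, E5, E6, E7, eventually_ge_atTop 1] with N h1 h2 h3 h4
    h5 h6 h7 h8
  set L := Real.log N with hLdef
  set t := llog N with htdef
  have hL0 : (0:ℝ) < L := by linarith
  have ht0 : (0:ℝ) < t := by linarith
  have hN0 : (0:ℝ) < (N:ℝ) := by exact_mod_cast h8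
  have hW0 : 0 < Wc N := by
    rw [Wc]; exact div_pos hL0 (by linarith)
  have h2qμt : (0:ℝ) < 2 * q * μ * t := by positivity
  have hsqrt0 : 0 < Real.sqrt (4 * Real.pi * Wc N) :=
    Real.sqrt_pos.mpr (by positivity)
  set n := (⌈2 * Wc N⌉₊ : ℝ) with hndef
  have hn0 : (0:ℝ) ≤ n := Nat.cast_nonneg _
  -- rewrite as exponential
  have e1 : Real.rpow (N : ℝ) (1 / 2 + Real.log (8 * t) / (2 * t)) =
      Real.exp (L * (1 / 2 + Real.log (8 * t) / (2 * t))) :=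
    Real.rpow_def_of_pos hN0 _
  have e2 : (2 * q * μ * t) ^ (⌈2 * Wc N⌉₊) =
      Real.exp (n * Real.log (2 * q * μ * t)) := by
    rw [hndef, Real.exp_nat_mul, Real.exp_log h2qμt]
  have e3 : Real.rpow (2 * γ) (2 * Wc N) =
      Real.exp (Real.log (2 * γ) * (2 * Wc N)) :=
    Real.rpow_def_of_pos (by linarith) _
  have edenom : 4 * Real.rpow (2 * γ) (2 * Wc N) * Real.sqrt (4 * Real.pi * Wc N) =
      Real.exp (Real.log 4 + Real.log (2 * γ) * (2 * Wc N)
        + Real.log (Real.sqrt (4 * Real.pi * Wc N))) := by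
    rw [e3, Real.exp_add, Real.exp_add, Real.exp_log (by norm_num : (0:ℝ) < 4),
      Real.exp_log hsqrt0]
  rw [e1, e2, edenom, ← Real.exp_add, ← Real.exp_add, ← Real.exp_sub, Real.exp_le_exp]
  -- the analytic inequality
  have hWL : Wc N ≤ L := by
    rw [Wc]; exact div_le_self hL0.le (by linarith)
  have hA2 : 0 ≤ Real.log (8 * t) / (2 * t) * L :=
    mul_nonneg (div_nonneg (Real.log_nonneg (by linarith)) (by linarith)) hL0.le
  have hA3 : n ≤ n * Real.log (2 * q * μ * t) := by
    nlinarith [(Real.le_log_iff_exp_le h2qμt).mpr h3]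
  have hA4 : q * μ * Tc γ N ≤ 1 := by
    have h5' : 16 * q * μ * t ^ 2 ≤ γ * L := by
      have ea : 16 * q * μ * t ^ 2 = (16 * q * μ * L) * (t ^ 2 / L) := by
        field_simp
      have eb : (16 * q * μ * L) * (γ / (16 * q * μ)) = γ * L := by
        field_simp
      calc 16 * q * μ * t ^ 2 = (16 * q * μ * L) * (t ^ 2 / L) := ea
        _ ≤ (16 * q * μ * L) * (γ / (16 * q * μ)) :=
            mul_le_mul_of_nonneg_left h5.le (by positivity)
        _ = γ * L := eb
    have eT : q * μ * Tc γ N = (16 * q * μ * t ^ 2) / (γ * L) := by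
      rw [Tc, ← htdef, ← hLdef]; ring
    rw [eT, div_le_one (by positivity)]
    linarith
  have hA6 : Real.log (2 * γ) * (2 * Wc N) ≤ L / 8 := by
    have hWc : 2 * Wc N = L / (4 * t) := by rw [Wc, ← htdef, ← hLdef]; ring
    rw [hWc, mul_comm]
    have hpos : 0 ≤ L / (4 * t) := by positivity
    calc L / (4 * t) * Real.log (2 * γ) ≤ L / (4 * t) * (t / 2) :=
          mul_le_mul_of_nonneg_left (by linarith) hpos
      _ = L / 8 := by field_simp; ring
  have hA7 : Real.log (Real.sqrt (4 * Real.pi * Wc N)) ≤ (Real.log (4 * Real.pi) + t) / 2 := by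
    rw [Real.log_sqrt (by positivity)]
    have h1' : Real.log (4 * Real.pi * Wc N) ≤ Real.log (4 * Real.pi * L) := by
      apply Real.log_le_log (by positivity)
      exact mul_le_mul_of_nonneg_left hWL (by positivity)
    have h2' : Real.log (4 * Real.pi * L) = Real.log (4 * Real.pi) + t := by
      rw [Real.log_mul (by positivity) hL0.ne', htdef, llog, hLdef]
    linarith
  have h6' : t ≤ L / 16 := by
    have := (div_lt_iff₀ hL0).mp h6
    linarith
  have hlog4 : 0 ≤ Real.log 4 := Real.log_nonneg (by norm_num)
  have hlog4π : 0 ≤ Real.log (4 * Real.pi) :=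
    Real.log_nonneg (by nlinarith [Real.pi_gt_three])
  have hexpand : L * (1 / 2 + Real.log (8 * t) / (2 * t)) =
      L / 2 + Real.log (8 * t) / (2 * t) * L := by ring
  linarith [hA2, hA3, hA4, hA6, hA7]
end
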